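/- Let K be a field and let X = {x ∈ K⁴ : x₁x₄ = x₂x₃, x ≠ (0,0,0,0)}. (a) For every x ∈ X with (x₁,x₂) ≠ (0,0) and (x₃,x₄) ≠ (0,0), the points [x₁ : x₂] and [x₃ : x₄] of the projective line ℙ(K²) coincide; hence the map φ : X → ℙ(K²) with φ(x) = [x₁ : x₂] if (x₁,x₂) ≠ (0,0) and φ(x) = [x₃ : x₄] otherwise is well defined and invariant under the action λ·(x₁,x₂,x₃,x₄) = (x₁, x₂, x₃+λx₁, x₄+λx₂). (b) There is no function ψ : K² → ℙ(K²) with ψ(x₁,x₂) = φ(x) for all x ∈ X; indeed φ takes different values at the points (0,0,1,0) and (0,0,0,1), both of which map to (0,0) under x ↦ (x₁,x₂). -/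

import Mathlib

open scoped Classical

/-- The map `φ : X → ℙ(K²)` on the punctured quadric: a point is written as a pair of
pairs `x = ((x₁,x₂),(x₃,x₄))`; `φ(x) = [x₁ : x₂]` if `(x₁,x₂) ≠ 0` and
`φ(x) = [x₃ : x₄]` otherwise. -/
noncomputable def quadricPhi (K : Type*) [Field K]
    (x : (K × K) × (K × K)) (hx : x ≠ 0) : Projectivization K (K × K) :=
  if h : x.1 ≠ 0 then Projectivization.mk K x.1 h
  else Projectivization.mk K x.2 (by
    intro h2
    exact hx (Prod.ext (not_not.mp h) h2))


theorem quadric_mk_eq (K : Type*) [Field K] (a b : K × K)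
    (hq : a.1 * b.2 = a.2 * b.1) (ha : a ≠ 0) (hb : b ≠ 0) :
    Projectivization.mk K a ha = Projectivization.mk K b hb := by
  rw [Projectivization.mk_eq_mk_iff]
  by_cases h1 : a.1 = 0
  · have ha2 : a.2 ≠ 0 := by
      intro h2; exact ha (Prod.ext h1 h2)
    have hb1 : b.1 = 0 := by
      have : a.2 * b.1 = 0 := by rw [← hq, h1, zero_mul]
      exact (mul_eq_zero.mp this).resolve_left ha2
    have hb2 : b.2 ≠ 0 := by
      intro h2; exact hb (Prod.ext hb1 h2)
    refine ⟨Units.mk0 (a.2 / b.2) (div_ne_zero ha2 hb2), ?_⟩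
    have : (a.2 / b.2) • b = a := by
      ext
      · simp [hb1, h1]
      · simp only [Prod.smul_snd, smul_eq_mul]
        field_simp
    simpa using this
  · have hb1 : b.1 ≠ 0 := by
      intro hb1
      have hb2 : b.2 = 0 := by
        have : a.1 * b.2 = 0 := by rw [hq, hb1, mul_zero]
        exact (mul_eq_zero.mp this).resolve_left h1
      exact hb (Prod.ext hb1 hb2)
    refine ⟨Units.mk0 (a.1 / b.1) (div_ne_zero h1 hb1), ?_⟩
    have : (a.1 / b.1) • b = a := by
      ext
      · simp only [Prod.smul_fst, smul_eq_mul]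
        field_simp
      · simp only [Prod.smul_snd, smul_eq_mul]
        field_simp
        linear_combination hq
    simpa using this

theorem quadricPhi_ne (K : Type*) [Field K] :
    quadricPhi K ((0, 0), (1, 0))
        (fun h => one_ne_zero (congrArg (fun p : (K × K) × (K × K) => p.2.1) h)) ≠
      quadricPhi K ((0, 0), (0, 1))
        (fun h => one_ne_zero (congrArg (fun p : (K × K) × (K × K) => p.2.2) h)) := by
  have h0 : ((0,0) : K × K) ≠ 0 → False := fun h => h rfl
  unfold quadricPhi
  rw [dif_neg (by simp), dif_neg (by simp)]
  simp only [ne_eq]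
  rw [Projectivization.mk_eq_mk_iff]
  rintro ⟨c, hc⟩
  have := congrArg Prod.fst hc
  simpa using this

/-- **The invariant morphism to `ℙ₁` does not factor through `x ↦ (x₁,x₂)`.**
(a) For points `((x₁,x₂),(x₃,x₄))` of the quadric `x₁x₄ = x₂x₃` with
`(x₁,x₂) ≠ 0 ≠ (x₃,x₄)` one has `[x₁ : x₂] = [x₃ : x₄]`, and the map `φ` with
`φ(x) = [x₁ : x₂]` if `(x₁,x₂) ≠ 0`, else `[x₃ : x₄]`, is invariant under
`λ·((x₁,x₂),(x₃,x₄)) = ((x₁,x₂),(x₃+λx₁, x₄+λx₂))`.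
(b) No map `ψ : K² → ℙ(K²)` satisfies `ψ(x₁,x₂) = φ(x)` on the punctured quadric;
indeed `φ` takes different values at `((0,0),(1,0))` and `((0,0),(0,1))`. -/
theorem no_factorization_through_invariant_projection (K : Type*) [Field K] :
    (∀ (a b : K × K), a.1 * b.2 = a.2 * b.1 →
        ∀ (ha : a ≠ 0) (hb : b ≠ 0),
          Projectivization.mk K a ha = Projectivization.mk K b hb) ∧
    (∀ (a b : K × K), a.1 * b.2 = a.2 * b.1 → ∀ (l : K)
        (hx : ((a, b) : (K × K) × (K × K)) ≠ 0)
        (hx' : ((a, b + l • a) : (K × K) × (K × K)) ≠ 0),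
          quadricPhi K (a, b + l • a) hx' = quadricPhi K (a, b) hx) ∧
    (¬ ∃ ψ : K × K → Projectivization K (K × K),
        ∀ (a b : K × K) (hq : a.1 * b.2 = a.2 * b.1)
          (hx : ((a, b) : (K × K) × (K × K)) ≠ 0),
          ψ a = quadricPhi K (a, b) hx) ∧
    quadricPhi K ((0, 0), (1, 0))
        (by simp [Prod.ext_iff]) ≠
      quadricPhi K ((0, 0), (0, 1))
        (by simp [Prod.ext_iff]) := by

  refine ⟨fun a b hq ha hb => quadric_mk_eq K a b hq ha hb, ?_, ?_, quadricPhi_ne K⟩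
  · intro a b hq l hx hx'
    by_cases h : a = 0
    · subst h; simp
    · unfold quadricPhi
      rw [dif_pos (by simpa using h), dif_pos (by simpa using h)]
  · rintro ⟨ψ, hψ⟩
    have h1 := hψ (0,0) (1,0) (by simp) (by simp [Prod.ext_iff])
    have h2 := hψ (0,0) (0,1) (by simp) (by simp [Prod.ext_iff])
    exact quadricPhi_ne K (h1 ▸ h2 ▸ rfl)
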